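/- Let n ≥ 1, let (a_{αβ})_{α,β=1}^n be a constant symmetric matrix with min_{α,β} a_{αβ} = a̲ > 0, and let (x_α, u_α, T_α) be a differentiable solution on [0,∞) of the KB-CS model whose initial data satisfy ∑_α x_α(0) = 0, ∑_α u_α(0) = 0, and (1/n)∑_α (T_α(0) + ½‖u_α(0)‖²) = T₀. Then for all t ≥ 0: 𝒱(t) ≤ 𝒱(0) e^{−a̲ t}, 𝒳(t) ≤ 𝒳(0) + 𝒱(0)/a̲, and ℰ(t) ≤ ℰ(0) e^{−a̲ t}. -/

import Mathlib

open Finset Real Set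
open scoped RealInnerProductSpace

variable {E : Type*} [NormedAddCommGroup E] [InnerProductSpace ℝ E]

lemma swap_sum {n : ℕ} (a : Fin n → Fin n → ℝ) (ha : ∀ α β, a α β = a β α)
    (h : Fin n → ℝ) : ∑ α, ∑ β, a α β * h β = ∑ α, ∑ β, a α β * h α := by
  rw [Finset.sum_comm]
  exact Finset.sum_congr rfl fun x _ => Finset.sum_congr rfl fun y _ => by rw [ha]

lemma swap_sum' {n : ℕ} (a : Fin n → Fin n → ℝ) (ha : ∀ α β, a α β = a β α)
    (h : Fin n → E) : ∑ α, ∑ β, a α β • h β = ∑ α, ∑ β, a α β • h α := by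
  rw [Finset.sum_comm]
  exact Finset.sum_congr rfl fun x _ => Finset.sum_congr rfl fun y _ => by rw [ha]

lemma key_ineq {n : ℕ} (a : Fin n → Fin n → ℝ) (ha_symm : ∀ α β, a α β = a β α)
    (abar : ℝ) (hmin : ∀ α β, abar ≤ a α β)
    (g : Fin n → E) (hg : ∑ α, g α = 0) :
    ∑ α, ∑ β, a α β * ⟪g α, g β - g α⟫ ≤ -(abar * n) * ∑ α, ‖g α‖ ^ 2 := by
  have hin : ∑ α, ∑ β, ⟪g α, g β⟫ = 0 := by
    simp_rw [← inner_sum, hg, inner_zero_right, Finset.sum_const_zero]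
  have e1 : 2 * (∑ α, ∑ β, a α β * ⟪g α, g β - g α⟫) + (∑ α, ∑ β, a α β * ‖g β - g α‖^2)
      = ∑ α, ∑ β, (a α β * ‖g β‖^2 - a α β * ‖g α‖^2) := by
    rw [Finset.mul_sum, ← Finset.sum_add_distrib]
    refine Finset.sum_congr rfl fun α _ => ?_
    rw [Finset.mul_sum, ← Finset.sum_add_distrib]
    refine Finset.sum_congr rfl fun β _ => ?_
    have h1 : ⟪g α, g β - g α⟫ = ⟪g α, g β⟫ - ‖g α‖^2 := by
      rw [inner_sub_right, real_inner_self_eq_norm_sq]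
    have h2 : ‖g β - g α‖^2 = ‖g β‖^2 - 2*⟪g α, g β⟫ + ‖g α‖^2 := by
      rw [norm_sub_sq_real, real_inner_comm]; try ring
    rw [h1, h2]; ring
  have e2 : ∑ α, ∑ β, (a α β * ‖g β‖^2 - a α β * ‖g α‖^2) = 0 := by
    simp only [Finset.sum_sub_distrib]
    exact sub_eq_zero_of_eq (swap_sum a ha_symm (fun γ => ‖g γ‖^2))
  have rowe : ∀ α : Fin n, ∑ β, ‖g β - g α‖^2
      = (∑ β, (‖g β‖^2 + ‖g α‖^2)) - 2 * ∑ β, ⟪g α, g β⟫ := by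
    intro α
    rw [Finset.mul_sum, ← Finset.sum_sub_distrib]
    exact Finset.sum_congr rfl fun β _ => by
      rw [norm_sub_sq_real, real_inner_comm]; ring
  have id2 : ∑ α, ∑ β, ‖g β - g α‖^2 = 2*(n:ℝ)*∑ α, ‖g α‖^2 := by
    simp_rw [rowe]
    rw [Finset.sum_sub_distrib]
    have c1 : ∑ α, (2:ℝ) * ∑ β, ⟪g α, g β⟫ = 0 := by
      rw [← Finset.mul_sum, hin, mul_zero]
    rw [c1, sub_zero]
    simp only [Finset.sum_add_distrib, Finset.sum_const, Finset.card_univ,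
      Fintype.card_fin, nsmul_eq_mul, ← Finset.mul_sum]
    ring
  have hb : abar * ∑ α, ∑ β, ‖g β - g α‖^2 ≤ ∑ α, ∑ β, a α β * ‖g β - g α‖^2 := by
    rw [Finset.mul_sum]
    refine Finset.sum_le_sum fun α _ => ?_
    rw [Finset.mul_sum]
    exact Finset.sum_le_sum fun β _ =>
      mul_le_mul_of_nonneg_right (hmin α β) (by positivity)
  rw [id2] at hb
  linarith

lemma decay {n : ℕ} (hn : 1 ≤ n) (a : Fin n → Fin n → ℝ)
    (ha_symm : ∀ α β, a α β = a β α) (abar : ℝ) (habar : 0 < abar)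
    (hmin : ∀ α β, abar ≤ a α β)
    (f : Fin n → ℝ → E)
    (hf : ∀ α, ∀ t ≥ (0:ℝ), HasDerivAt (f α) ((n:ℝ)⁻¹ • ∑ β, a α β • (f β t - f α t)) t)
    (hf0 : ∑ α, f α 0 = 0) :
    ∀ t ≥ (0:ℝ), ∑ α, ‖f α t‖^2 ≤ (∑ α, ‖f α 0‖^2) * Real.exp (-(2*abar) * t) := by
  have hnR : (0:ℝ) < n := by exact_mod_cast hn
  -- conservation of the sum
  have hS : ∀ t ≥ (0:ℝ), HasDerivAt (fun s => ∑ α, f α s) 0 t := by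
    intro t ht
    have h := HasDerivAt.fun_sum (fun α (_ : α ∈ Finset.univ) => hf α t ht)
    convert h using 1
    rw [← Finset.smul_sum]
    have hz : ∑ α, ∑ β, a α β • (f β t - f α t) = 0 := by
      simp only [smul_sub, Finset.sum_sub_distrib]
      exact sub_eq_zero_of_eq (swap_sum' a ha_symm (fun γ => f γ t))
    rw [hz, smul_zero]
  have hS0 : ∀ t ≥ (0:ℝ), ∑ α, f α t = 0 := by
    intro t ht
    have hb := Convex.norm_image_sub_le_of_norm_hasDerivWithin_le
      (f := fun s => ∑ α, f α s) (f' := fun _ => 0) (s := Set.Ici (0:ℝ)) (C := 0)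
      (fun s hs => (hS s hs).hasDerivWithinAt) (fun s _ => by simp)
      (convex_Ici 0) (Set.self_mem_Ici) ht
    have hb' : ‖(∑ α, f α t) - (∑ α, f α 0)‖ ≤ 0 * ‖t - 0‖ := hb
    rw [hf0, sub_zero, zero_mul] at hb'
    exact norm_le_zero_iff.1 hb'
  -- derivative of W
  set W : ℝ → ℝ := fun s => ∑ α, ‖f α s‖^2 with hWdef
  have hWderiv : ∀ t ≥ (0:ℝ), HasDerivAt W
      (∑ α, 2 * ⟪f α t, (n:ℝ)⁻¹ • ∑ β, a α β • (f β t - f α t)⟫) t := by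
    intro t ht
    refine HasDerivAt.fun_sum fun α _ => ?_
    have h := (hf α t ht).inner ℝ (hf α t ht)
    have heq : (fun s => ⟪f α s, f α s⟫) = fun s => ‖f α s‖^2 := by
      funext s; rw [real_inner_self_eq_norm_sq]
    rw [heq] at h
    refine h.congr_deriv ?_
    rw [real_inner_comm (f α t)]
    ring
  -- bound on derivative
  have hWle : ∀ t ≥ (0:ℝ),
      (∑ α, 2 * ⟪f α t, (n:ℝ)⁻¹ • ∑ β, a α β • (f β t - f α t)⟫) ≤ -(2*abar) * W t := by
    intro t ht
    have hval : (∑ α, 2 * ⟪f α t, (n:ℝ)⁻¹ • ∑ β, a α β • (f β t - f α t)⟫)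
        = 2*(n:ℝ)⁻¹ * ∑ α, ∑ β, a α β * ⟪f α t, f β t - f α t⟫ := by
      rw [Finset.mul_sum]
      refine Finset.sum_congr rfl fun α _ => ?_
      rw [real_inner_smul_right, inner_sum]
      simp_rw [real_inner_smul_right]
      ring
    rw [hval]
    have hk := key_ineq a ha_symm abar hmin (fun α => f α t) (hS0 t ht)
    have h2 : 2*(n:ℝ)⁻¹ * ∑ α, ∑ β, a α β * ⟪f α t, f β t - f α t⟫
        ≤ 2*(n:ℝ)⁻¹ * (-(abar * n) * ∑ α, ‖f α t‖^2) :=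
      mul_le_mul_of_nonneg_left hk (by positivity)
    refine h2.trans (le_of_eq ?_)
    field_simp [hWdef]
    ring
  -- Gronwall via monotonicity
  have hGd : ∀ t ≥ (0:ℝ), HasDerivAt (fun s => W s * Real.exp (2*abar*s))
      ((∑ α, 2 * ⟪f α t, (n:ℝ)⁻¹ • ∑ β, a α β • (f β t - f α t)⟫) * Real.exp (2*abar*t)
        + W t * (2*abar * Real.exp (2*abar*t))) t := by
    intro t ht
    have he : HasDerivAt (fun s : ℝ => Real.exp (2*abar*s)) (2*abar * Real.exp (2*abar*t)) t := by
      have h1 : HasDerivAt (fun s : ℝ => 2*abar*s) (2*abar) t := by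
        simpa using (hasDerivAt_id t).const_mul (2*abar)
      have h2 : HasDerivAt (fun s : ℝ => Real.exp (2*abar*s))
          (Real.exp (2*abar*t) * (2*abar)) t :=
        (Real.hasDerivAt_exp (2*abar*t)).comp t h1
      rw [show 2*abar*Real.exp (2*abar*t) = Real.exp (2*abar*t) * (2*abar) by ring]
      exact h2
    exact (hWderiv t ht).mul he
  have anti : AntitoneOn (fun s => W s * Real.exp (2*abar*s)) (Set.Ici 0) := by
    apply antitoneOn_of_deriv_nonpos (convex_Ici 0)
    · exact fun s hs => (hGd s hs).continuousAt.continuousWithinAt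
    · intro s hs
      rw [interior_Ici] at hs
      exact (hGd s hs.le).differentiableAt.differentiableWithinAt
    · intro s hs
      rw [interior_Ici] at hs
      rw [(hGd s hs.le).deriv]
      have hle := hWle s hs.le
      have hW0 : 0 ≤ W s := Finset.sum_nonneg fun α _ => by positivity
      nlinarith [Real.exp_pos (2*abar*s), Real.exp_nonneg (2*abar*s)]
  intro t ht
  have h := anti (Set.self_mem_Ici) (Set.mem_Ici.2 ht) ht
  simp only [mul_zero, Real.exp_zero, mul_one] at h
  have hepos := Real.exp_pos (2*abar*t)
  have key : W t ≤ W 0 * Real.exp (-(2*abar)*t) := by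
    rw [show (-(2*abar))*t = -(2*abar*t) by ring]
    calc W t = W t * Real.exp (2*abar*t) * Real.exp (-(2*abar*t)) := by
          rw [mul_assoc, ← Real.exp_add]; simp
      _ ≤ W 0 * Real.exp (-(2*abar*t)) :=
          mul_le_mul_of_nonneg_right h (Real.exp_nonneg _)
  exact key

lemma hasDerivAt_exp_mul (c s : ℝ) :
    HasDerivAt (fun r : ℝ => Real.exp (c*r)) (c * Real.exp (c*s)) s := by
  have h1 : HasDerivAt (fun r : ℝ => c*r) c s := by
    simpa using (hasDerivAt_id s).const_mul c
  have h2 : HasDerivAt (fun r : ℝ => Real.exp (c*r)) (Real.exp (c*s) * c) s :=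
    (Real.hasDerivAt_exp (c*s)).comp s h1
  rw [mul_comm]; exact h2

set_option synthInstance.maxHeartbeats 400000 in
set_option maxHeartbeats 1000000 in
theorem stmt5 (n d : ℕ) (hn : 1 ≤ n)
    (a : Fin n → Fin n → ℝ) (ha_symm : ∀ α β, a α β = a β α)
    (abar : ℝ) (habar : 0 < abar)
    (hmin : ∀ α β, abar ≤ a α β) (hmin' : ∃ α β, a α β = abar)
    (T₀ : ℝ)
    (x u : Fin n → ℝ → EuclideanSpace ℝ (Fin d)) (T : Fin n → ℝ → ℝ)
    (hx : ∀ α, ∀ t ≥ (0 : ℝ), HasDerivAt (x α) (u α t) t)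
    (hu : ∀ α, ∀ t ≥ (0 : ℝ), HasDerivAt (u α)
      ((n : ℝ)⁻¹ • ∑ β, a α β • (u β t - u α t)) t)
    (hT : ∀ α, ∀ t ≥ (0 : ℝ), HasDerivAt (fun s => T α s + ‖u α s‖ ^ 2 / 2)
      ((n : ℝ)⁻¹ * ∑ β, a α β *
        ((T β t + ‖u β t‖ ^ 2 / 2) - (T α t + ‖u α t‖ ^ 2 / 2))) t)
    (hx0 : ∑ α, x α 0 = 0) (hu0 : ∑ α, u α 0 = 0)
    (hT0 : (n : ℝ)⁻¹ * ∑ α, (T α 0 + ‖u α 0‖ ^ 2 / 2) = T₀) :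
    ∀ t ≥ (0 : ℝ),
      Real.sqrt (∑ α, ‖u α t‖ ^ 2) ≤
        Real.sqrt (∑ α, ‖u α 0‖ ^ 2) * Real.exp (-abar * t) ∧
      Real.sqrt (∑ α, ‖x α t‖ ^ 2) ≤
        Real.sqrt (∑ α, ‖x α 0‖ ^ 2) + Real.sqrt (∑ α, ‖u α 0‖ ^ 2) / abar ∧
      Real.sqrt (∑ α, (T α t + ‖u α t‖ ^ 2 / 2 - T₀) ^ 2) ≤
        Real.sqrt (∑ α, (T α 0 + ‖u α 0‖ ^ 2 / 2 - T₀) ^ 2) * Real.exp (-abar * t) := by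
  have hnR : (0:ℝ) < n := by exact_mod_cast hn
  have sqrt_step : ∀ (A B c : ℝ), 0 ≤ B → A ≤ B * Real.exp (-(2*abar)*c) →
      Real.sqrt A ≤ Real.sqrt B * Real.exp (-abar*c) := by
    intro A B c hB h
    calc Real.sqrt A ≤ Real.sqrt (B * Real.exp (-(2*abar)*c)) := Real.sqrt_le_sqrt h
      _ = Real.sqrt B * Real.exp (-abar*c) := by
        rw [Real.sqrt_mul hB, show (-(2*abar))*c = (-abar*c) + (-abar*c) by ring,
          Real.exp_add, Real.sqrt_mul_self (Real.exp_nonneg _)]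
  -- Part 1
  have hdecU := decay hn a ha_symm abar habar hmin u hu hu0
  have part1 : ∀ t ≥ (0:ℝ), Real.sqrt (∑ α, ‖u α t‖ ^ 2) ≤
      Real.sqrt (∑ α, ‖u α 0‖ ^ 2) * Real.exp (-abar * t) := by
    intro t ht
    exact sqrt_step _ _ t (Finset.sum_nonneg fun α _ => by positivity) (hdecU t ht)
  -- Part 3
  have part3 : ∀ t ≥ (0:ℝ), Real.sqrt (∑ α, (T α t + ‖u α t‖ ^ 2 / 2 - T₀) ^ 2) ≤
      Real.sqrt (∑ α, (T α 0 + ‖u α 0‖ ^ 2 / 2 - T₀) ^ 2) * Real.exp (-abar * t) := by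
    have hEd : ∀ α, ∀ t ≥ (0:ℝ),
        HasDerivAt (fun s => T α s + ‖u α s‖ ^ 2 / 2 - T₀)
          ((n:ℝ)⁻¹ • ∑ β, a α β •
            ((T β t + ‖u β t‖ ^ 2 / 2 - T₀) - (T α t + ‖u α t‖ ^ 2 / 2 - T₀))) t := by
      intro α t ht
      have h := (hT α t ht).sub_const T₀
      refine h.congr_deriv ?_
      simp only [smul_eq_mul]
      congr 1
      exact Finset.sum_congr rfl fun β _ => by ring
    have hEf0 : ∑ α, (T α 0 + ‖u α 0‖ ^ 2 / 2 - T₀) = 0 := by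
      have hn0 : (n:ℝ) ≠ 0 := ne_of_gt hnR
      have hsum : ∑ α, (T α 0 + ‖u α 0‖ ^ 2 / 2) = T₀ * n := by
        rw [inv_mul_eq_div, div_eq_iff hn0] at hT0
        exact hT0
      rw [Finset.sum_sub_distrib, hsum, Finset.sum_const, Finset.card_univ,
        Fintype.card_fin, nsmul_eq_mul]
      ring
    have hdecE := decay hn a ha_symm abar habar hmin
      (fun α s => T α s + ‖u α s‖ ^ 2 / 2 - T₀) hEd hEf0
    intro t ht
    have h := hdecE t ht
    simp only [Real.norm_eq_abs, sq_abs] at h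
    exact sqrt_step _ _ t (Finset.sum_nonneg fun α _ => by positivity) h
  -- Part 2
  have part2 : ∀ t ≥ (0:ℝ), Real.sqrt (∑ α, ‖x α t‖ ^ 2) ≤
      Real.sqrt (∑ α, ‖x α 0‖ ^ 2) + Real.sqrt (∑ α, ‖u α 0‖ ^ 2) / abar := by
    intro t ht
    set X0 := Real.sqrt (∑ α, ‖x α 0‖ ^ 2) with hX0
    set V0 := Real.sqrt (∑ α, ‖u α 0‖ ^ 2) with hV0
    have hV0n : 0 ≤ V0 := Real.sqrt_nonneg _
    set Y : ℝ → PiLp 2 (fun _ : Fin n => EuclideanSpace ℝ (Fin d)) :=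
      fun s => WithLp.toLp 2 (fun α => x α s) with hYdef
    set Yd : ℝ → PiLp 2 (fun _ : Fin n => EuclideanSpace ℝ (Fin d)) :=
      fun s => WithLp.toLp 2 (fun α => u α s) with hYddef
    have hYd : ∀ s ≥ (0:ℝ), HasDerivAt Y (Yd s) s := by
      intro s hs
      have h1 : HasDerivAt
          (fun r => (fun α => x α r : ∀ _ : Fin n, EuclideanSpace ℝ (Fin d)))
          (fun α => u α s) s := hasDerivAt_pi.2 fun α => hx α s hs
      exact ((PiLp.continuousLinearEquiv 2 ℝ
        (fun _ : Fin n => EuclideanSpace ℝ (Fin d))).symm.toContinuousLinearMap.hasFDerivAt.comp_hasDerivAt s h1 : _)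
    have hnormY : ∀ s, ‖Y s‖ = Real.sqrt (∑ α, ‖x α s‖ ^ 2) := fun s =>
      PiLp.norm_eq_of_L2 (Y s)
    have hnormYd : ∀ s, ‖Yd s‖ = Real.sqrt (∑ α, ‖u α s‖ ^ 2) := fun s =>
      PiLp.norm_eq_of_L2 (Yd s)
    set B : ℝ → ℝ := fun s => X0 + V0/abar * (1 - Real.exp (-abar*s)) with hBdef
    have hB : ∀ s, HasDerivAt B (V0 * Real.exp (-abar*s)) s := by
      intro s
      have h1 := hasDerivAt_exp_mul (-abar) s
      have h2 := ((h1.const_sub 1).const_mul (V0/abar)).const_add X0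
      refine h2.congr_deriv (Eq.symm ?_)
      field_simp
    have key := image_norm_le_of_norm_deriv_right_le_deriv_boundary
      (f := Y) (f' := Yd) (a := 0) (b := t)
      (fun s hs => (hYd s hs.1).continuousAt.continuousWithinAt)
      (fun s hs => (hYd s hs.1).hasDerivWithinAt)
      (by rw [hnormY 0]; simp [hBdef, hX0])
      hB
      (fun s hs => by
        rw [hnormYd s]
        have := part1 s hs.1
        calc Real.sqrt (∑ α, ‖u α s‖ ^ 2) ≤ V0 * Real.exp (-abar * s) := this
          _ = V0 * Real.exp (-abar * s) := rfl)
      (Set.right_mem_Icc.2 ht)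
    rw [hnormY t] at key
    refine key.trans ?_
    have hexp : 0 ≤ Real.exp (-abar*t) := Real.exp_nonneg _
    have h1 : V0/abar * (1 - Real.exp (-abar*t)) ≤ V0/abar := by
      have : 0 ≤ V0/abar := by positivity
      nlinarith
    simp only [hBdef]
    linarith
  exact fun t ht => ⟨part1 t ht, part2 t ht, part3 t ht⟩
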